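/- Let P be a reflexive cs-crosspolytope conv(±e_1, …, ±e_d) given by a Wirth matrix A with columns e_1, …, e_d. Then any two facets of P are isomorphic as lattice polytopes: for any sign vector (ε_1, …, ε_d) ∈ {±1}^d there exists U ∈ GL_d(ℤ) with U·(ε_1 e_1, …, ε_d e_d) = (e_1, …, e_d) up to the stated column scaling, i.e., the facet conv(ε_1 e_1, …, ε_d e_d) is unimodularly equivalent to conv(e_1, …, e_d). -/

import Mathlib

open Pointwise Matrix

/-- Ambient space `ℝ^d`. -/
abbrev E (d : ℕ) := Fin d → ℝ

/-- A point of the lattice `M ≅ ℤ^d`. -/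
def IsLatticePt {d : ℕ} (x : E d) : Prop := ∀ i, ∃ n : ℤ, x i = (n : ℝ)

/-- The standard pairing between `N_ℝ` and `M_ℝ`. -/
def dot {d : ℕ} (x y : E d) : ℝ := ∑ i, x i * y i

/-- The dual (polar) polytope `P* = {x : ⟨x,y⟩ ≥ -1 ∀ y ∈ P}`. -/
def polarDual {d : ℕ} (P : Set (E d)) : Set (E d) := {x | ∀ y ∈ P, -1 ≤ dot x y}

/-- A lattice polytope: convex hull of finitely many lattice points. -/
def IsLatticePolytope {d : ℕ} (P : Set (E d)) : Prop :=
  ∃ S : Finset (E d), (∀ x ∈ S, IsLatticePt x) ∧ P = convexHull ℝ (S : Set (E d))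

/-- A reflexive polytope: a lattice polytope with `0` in its interior whose polar dual is
again a lattice polytope (i.e. the hull of its lattice points). -/
def IsReflexive {d : ℕ} (P : Set (E d)) : Prop :=
  IsLatticePolytope P ∧ 0 ∈ interior P ∧
    polarDual P = convexHull ℝ {x | x ∈ polarDual P ∧ IsLatticePt x}

/-- A facet: a nonempty exposed face of dimension `d - 1`. -/
def IsFacet {d : ℕ} (P F : Set (E d)) : Prop :=
  IsExposed ℝ P F ∧ F.Nonempty ∧
    Module.finrank ℝ (affineSpan ℝ F).direction = d - 1

/-- Simplicial polytope: every facet is a simplex (hull of `d` affinely independent points). -/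
def IsSimplicial {d : ℕ} (P : Set (E d)) : Prop :=
  ∀ F, IsFacet P F → ∃ v : Fin d → E d,
    AffineIndependent ℝ v ∧ F = convexHull ℝ (Set.range v)

/-- Pseudo-symmetric: some facet `F` has `-F` also a facet. -/
def IsPseudoSymmetric {d : ℕ} (P : Set (E d)) : Prop :=
  ∃ F, IsFacet P F ∧ IsFacet P (-F)

/-- Application of an integer matrix to a point of `ℝ^d`. -/
def applyU {d : ℕ} (U : Matrix (Fin d) (Fin d) ℤ) (x : E d) : E d :=
  (U.map (Int.cast : ℤ → ℝ)) *ᵥ x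

/-- Wirth matrix: block form `[[2·Id_f, 0], [C, Id_{d-f}]]` with `C` a `{0,1}`-matrix
each of whose columns has an odd number of `1`'s. -/
def IsWirth {d : ℕ} (A : Matrix (Fin d) (Fin d) ℤ) : Prop :=
  ∃ f : ℕ, f < d ∧
    (∀ i j : Fin d, (i : ℕ) < f → (j : ℕ) < f → A i j = if i = j then 2 else 0) ∧
    (∀ i j : Fin d, (i : ℕ) < f → f ≤ (j : ℕ) → A i j = 0) ∧
    (∀ i j : Fin d, f ≤ (i : ℕ) → (j : ℕ) < f → A i j = 0 ∨ A i j = 1) ∧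
    (∀ i j : Fin d, f ≤ (i : ℕ) → f ≤ (j : ℕ) → A i j = if i = j then 1 else 0) ∧
    (∀ j : Fin d, (j : ℕ) < f →
      Odd (Finset.univ.filter (fun i : Fin d => f ≤ (i : ℕ) ∧ A i j = 1)).card)


lemma sum_single_spike {n : ℕ} (g : Fin n → ℤ) (a : Fin n)
    (h : ∀ k, k ≠ a → g k = 0) : ∑ k, g k = g a :=
  Finset.sum_eq_single_of_mem a (Finset.mem_univ a) (fun k _ hk => h k hk)

lemma sum_two_spike {n : ℕ} (g : Fin n → ℤ) (a b : Fin n) (hab : a ≠ b)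
    (h : ∀ k, k ≠ a → k ≠ b → g k = 0) : ∑ k, g k = g a + g b := by
  rw [← Finset.sum_pair hab]
  refine (Finset.sum_subset (Finset.subset_univ {a, b}) ?_).symm
  intro k _ hk
  simp only [Finset.mem_insert, Finset.mem_singleton, not_or] at hk
  exact h k hk.1 hk.2


theorem wirth_facets_isomorphic (d : ℕ) (A : Matrix (Fin d) (Fin d) ℤ)
    (hA : IsWirth A) (ε : Fin d → ℝ) (hε : ∀ j, ε j = 1 ∨ ε j = -1) :
    ∃ U : Matrix (Fin d) (Fin d) ℤ, IsUnit U.det ∧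
      ∀ j : Fin d, applyU U (ε j • (fun i => (A i j : ℝ))) = fun i => (A i j : ℝ) := by
  obtain ⟨f, hfd, h11, h12, h21, h22, -⟩ := hA
  set s : Fin d → ℤ := fun j => if ε j = 1 then 1 else -1 with hs
  have s1 : ∀ j, s j = 1 ∨ s j = -1 := by
    intro j; rcases hε j with h | h <;> simp [hs, h] <;> norm_num
  have hsR : ∀ j, (s j : ℝ) = ε j := by
    intro j; rcases hε j with h | h <;> simp [hs, h] <;> norm_num
  have hss : ∀ j, s j * s j = 1 := by
    intro j; rcases s1 j with h | h <;> simp [h]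
  have hneg : ∀ i j : Fin d, s i ≠ s j → s i = -s j := by
    intro i j hij; rcases s1 i with h | h <;> rcases s1 j with h' | h' <;> simp_all
  set U : Matrix (Fin d) (Fin d) ℤ := fun i j =>
    if (i : ℕ) < f then (if i = j then s i else 0)
    else if (j : ℕ) < f then A i j * (if s i = s j then 0 else s j)
    else if i = j then s i else 0 with hU
  have hUlow : ∀ i j : Fin d, (i : ℕ) < f → U i j = if i = j then s i else 0 := by
    intro i j hi; simp [hU, hi]
  have hUmid : ∀ i j : Fin d, f ≤ (i : ℕ) → (j : ℕ) < f →
      U i j = A i j * (if s i = s j then 0 else s j) := by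
    intro i j hi hj; simp [hU, Nat.not_lt.mpr hi, hj]
  have hUhigh : ∀ i j : Fin d, f ≤ (i : ℕ) → f ≤ (j : ℕ) →
      U i j = if i = j then s i else 0 := by
    intro i j hi hj; simp [hU, Nat.not_lt.mpr hi, Nat.not_lt.mpr hj]
  -- key column identity
  have key : ∀ i j : Fin d, ∑ k, U i k * (s j * A k j) = A i j := by
    intro i j
    by_cases hi : (i : ℕ) < f
    · rw [sum_single_spike _ i (fun k hk => by rw [hUlow i k hi, if_neg (fun h => hk h.symm), zero_mul])]
      rw [hUlow i i hi, if_pos rfl]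
      by_cases hij : i = j
      · subst hij
        rw [← mul_assoc, mul_comm (s i) (s i), hss i, one_mul]
      · have hA0 : A i j = 0 := by
          by_cases hjf : (j : ℕ) < f
          · rw [h11 i j hi hjf, if_neg hij]
          · exact h12 i j hi (Nat.not_lt.mp hjf)
        rw [hA0]; ring
    · have hif : f ≤ (i : ℕ) := Nat.not_lt.mp hi
      by_cases hj : (j : ℕ) < f
      · have hij : i ≠ j := fun h => hi (h ▸ hj)
        rw [sum_two_spike _ i j hij (fun k hki hkj => ?_)]
        · rw [hUhigh i i hif hif, if_pos rfl, hUmid i j hif hj]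
          have hAjj : A j j = 2 := by rw [h11 j j hj hj, if_pos rfl]
          rw [hAjj]
          by_cases hsij : s i = s j
          · rw [if_pos hsij, hsij]; linear_combination (A i j) * hss j
          · rw [if_neg hsij, hneg i j hsij]; linear_combination (A i j) * hss j
        · -- vanishing of other terms
          by_cases hkf : (k : ℕ) < f
          · rw [h11 k j hkf hj, if_neg hkj]; ring
          · rw [hUhigh i k hif (Nat.not_lt.mp hkf), if_neg (fun h => hki h.symm)]; ring
      · have hjf : f ≤ (j : ℕ) := Nat.not_lt.mp hj
        rw [sum_single_spike _ i (fun k hk => ?_)]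
        · rw [hUhigh i i hif hif, if_pos rfl, h22 i j hif hjf]
          by_cases hij : i = j
          · rw [if_pos hij, hij]; linear_combination hss j
          · rw [if_neg hij]; ring
        · by_cases hkf : (k : ℕ) < f
          · rw [h12 k j hkf hjf]; ring
          · rw [hUhigh i k hif (Nat.not_lt.mp hkf), if_neg (fun h => hk h.symm)]; ring
  -- U is an involution
  have hU2 : U * U = 1 := by
    ext i j
    rw [Matrix.mul_apply, Matrix.one_apply]
    by_cases hi : (i : ℕ) < f
    · rw [sum_single_spike _ i (fun k hk => by rw [hUlow i k hi, if_neg (fun h => hk h.symm), zero_mul])]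
      rw [hUlow i i hi, if_pos rfl, hUlow i j hi]
      by_cases hij : i = j
      · rw [if_pos hij, if_pos hij, hij, hss j]
      · rw [if_neg hij, if_neg hij]; ring
    · have hif : f ≤ (i : ℕ) := Nat.not_lt.mp hi
      by_cases hj : (j : ℕ) < f
      · have hij : i ≠ j := fun h => hi (h ▸ hj)
        rw [if_neg hij]
        rw [sum_two_spike _ i j hij (fun k hki hkj => ?_)]
        · rw [hUhigh i i hif hif, if_pos rfl, hUmid i j hif hj, hUlow j j hj, if_pos rfl]
          by_cases hsij : s i = s j
          · rw [if_pos hsij]; ring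
          · rw [if_neg hsij, hneg i j hsij]; ring
        · by_cases hkf : (k : ℕ) < f
          · rw [hUlow k j hkf, if_neg hkj]; ring
          · rw [hUhigh i k hif (Nat.not_lt.mp hkf), if_neg (fun h => hki h.symm)]; ring
      · have hjf : f ≤ (j : ℕ) := Nat.not_lt.mp hj
        rw [sum_single_spike _ i (fun k hk => ?_)]
        · rw [hUhigh i i hif hif, if_pos rfl, hUhigh i j hif hjf]
          by_cases hij : i = j
          · rw [if_pos hij, if_pos hij, hij, hss j]
          · rw [if_neg hij, if_neg hij]; ring
        · by_cases hkf : (k : ℕ) < f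
          · rw [hUlow k j hkf, if_neg (fun h => absurd hkf (by rw [h]; exact Nat.not_lt.mpr hjf))]; ring
          · rw [hUhigh i k hif (Nat.not_lt.mp hkf), if_neg (fun h => hk h.symm)]; ring
  refine ⟨U, ?_, ?_⟩
  · have : U.det * U.det = 1 := by rw [← Matrix.det_mul, hU2, Matrix.det_one]
    exact isUnit_iff_exists_inv.mpr ⟨_, this⟩
  · intro j
    funext i
    show ∑ k, (U.map (Int.cast : ℤ → ℝ)) i k * (ε j • fun i => (A i j : ℝ)) k = (A i j : ℝ)
    simp only [Matrix.map_apply, Pi.smul_apply, smul_eq_mul]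
    rw [show ε j = (s j : ℝ) from (hsR j).symm]
    have h := key i j
    calc ∑ k, (U i k : ℝ) * ((s j : ℝ) * (A k j : ℝ))
        = ((∑ k, U i k * (s j * A k j) : ℤ) : ℝ) := by push_cast; ring
      _ = (A i j : ℝ) := by rw [h]
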